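/- For 0 < α < 1, the probability of exactly k jumps up to time n for a renewal process with Sibuya waiting times is ℙ[T_k ≤ n < T_{k+1}] = (-1)^n ∑_{ℓ=0}^k (-1)^ℓ binom(k,ℓ) binom((ℓ+1)α - 1, n), where T_k is the sum of the first k waiting times. -/

import Mathlib

open MeasureTheory

/-- The generalized binomial coefficient `binom(x, n) = (∏_{j=0}^{n-1}(x - j))/n!`. -/
noncomputable def gchoose (x : ℝ) (n : ℕ) : ℝ :=
  (∏ j ∈ Finset.range n, (x - (j : ℝ))) / (n.factorial : ℝ)

lemma gchoose_zero (x : ℝ) : gchoose x 0 = 1 := by simp [gchoose]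

lemma gchoose_succ (x : ℝ) (n : ℕ) :
    gchoose x (n+1) = gchoose x n * (x - n) / ((n:ℝ)+1) := by
  simp only [gchoose, Finset.prod_range_succ, Nat.factorial_succ]
  push_cast
  rw [div_mul_eq_mul_div, div_div, mul_comm ((n:ℝ)+1)]

lemma succ_mul_gchoose (x : ℝ) (n : ℕ) :
    ((n:ℝ)+1) * gchoose x (n+1) = x * gchoose (x-1) n := by
  have h2 : ((n:ℝ)+1) ≠ 0 := by positivity
  have h : ∏ j ∈ Finset.range (n+1), (x - (j:ℝ))
      = x * ∏ j ∈ Finset.range n, (x - 1 - (j:ℝ)) := by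
    rw [Finset.prod_range_succ']
    have hc : ∀ j ∈ Finset.range n, (x - ((j:ℝ)+1)) = (x - 1 - (j:ℝ)) := by
      intro j _; ring
    simp only [Nat.cast_add, Nat.cast_one, Nat.cast_zero, sub_zero]
    rw [Finset.prod_congr rfl hc, mul_comm]
  simp only [gchoose, h, Nat.factorial_succ]
  push_cast
  rw [mul_div_assoc', mul_div_mul_left _ _ h2, mul_div_assoc]

lemma gchoose_zero_left (n : ℕ) (hn : n ≠ 0) : gchoose 0 n = 0 := by
  unfold gchoose
  rw [Finset.prod_eq_zero (Finset.mem_range.mpr (Nat.pos_of_ne_zero hn)) (by norm_num)]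
  simp

lemma gchoose_vandermonde (n : ℕ) (x y : ℝ) :
    ∑ m ∈ Finset.range (n+1), gchoose x m * gchoose y (n - m) = gchoose (x+y) n := by
  induction n generalizing x y with
  | zero => simp [gchoose]
  | succ n ih =>
    have hn1 : ((n:ℝ)+1) ≠ 0 := by positivity
    have key : ((n:ℝ)+1) * ∑ m ∈ Finset.range (n+2), gchoose x m * gchoose y (n+1-m)
        = (x + y) * gchoose (x + y - 1) n := by
      have hsplit : ∀ m ∈ Finset.range (n+2),
          ((n:ℝ)+1) * (gchoose x m * gchoose y (n+1-m))
          = (m:ℝ) * gchoose x m * gchoose y (n+1-m)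
            + ((n+1-m : ℕ):ℝ) * gchoose y (n+1-m) * gchoose x m := by
        intro m hm
        rw [Finset.mem_range] at hm
        have hc : ((n+1-m:ℕ):ℝ) = (n:ℝ)+1-(m:ℝ) := by
          have hm' : m ≤ n+1 := by omega
          push_cast [hm']
          ring
        rw [hc]; ring
      rw [Finset.mul_sum, Finset.sum_congr rfl hsplit, Finset.sum_add_distrib]
      have hA : ∑ m ∈ Finset.range (n+2), (m:ℝ) * gchoose x m * gchoose y (n+1-m)
          = x * gchoose (x - 1 + y) n := by
        rw [Finset.sum_range_succ']
        have hterm : ∀ m ∈ Finset.range (n+1),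
            ((m+1:ℕ):ℝ) * gchoose x (m+1) * gchoose y (n+1-(m+1))
            = x * (gchoose (x-1) m * gchoose y (n-m)) := by
          intro m _
          have h1 : n+1-(m+1) = n-m := by omega
          rw [h1]
          have h2 := succ_mul_gchoose x m
          push_cast
          rw [mul_assoc, ← mul_assoc ((m:ℝ)+1), h2]
          ring
        rw [Finset.sum_congr rfl hterm, ← Finset.mul_sum, ih]
        simp
      have hB : ∑ m ∈ Finset.range (n+2), ((n+1-m:ℕ):ℝ) * gchoose y (n+1-m) * gchoose x m
          = y * gchoose (x + y - 1) n := by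
        rw [Finset.sum_range_succ]
        have hterm : ∀ m ∈ Finset.range (n+1),
            ((n+1-m:ℕ):ℝ) * gchoose y (n+1-m) * gchoose x m
            = y * (gchoose x m * gchoose (y-1) (n-m)) := by
          intro m hm
          rw [Finset.mem_range] at hm
          have h1 : n+1-m = (n-m)+1 := by omega
          rw [h1]
          have h2 := succ_mul_gchoose y (n-m)
          push_cast
          rw [mul_assoc, ← mul_assoc, h2]
          ring
        rw [Finset.sum_congr rfl hterm, ← Finset.mul_sum, ih]
        simp only [Nat.sub_self, Nat.cast_zero, zero_mul, add_zero]
        have harg : x + (y - 1) = x + y - 1 := by ring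
        rw [harg]
      rw [hA, hB]
      have harg : x - 1 + y = x + y - 1 := by ring
      rw [harg]
      ring
    have hfin := succ_mul_gchoose (x+y) n
    exact mul_left_cancel₀ hn1 (key.trans hfin.symm)

noncomputable def sibP (α : ℝ) (m : ℕ) : ℝ :=
  if m = 0 then 0 else (α / m) * ∏ ℓ ∈ Finset.Icc 1 (m - 1), (1 - α / (ℓ : ℝ))

noncomputable def sibB (α : ℝ) (j : ℕ) : ℝ := ∏ ℓ ∈ Finset.Icc 1 j, (1 - α / (ℓ : ℝ))

noncomputable def Scomb (α : ℝ) (k n : ℕ) : ℝ :=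
  (-1:ℝ)^n * ∑ ℓ ∈ Finset.range (k+1), (-1:ℝ)^ℓ * (k.choose ℓ : ℝ) * gchoose ((ℓ:ℝ) * α) n

lemma sibB_zero (α : ℝ) : sibB α 0 = 1 := by simp [sibB]

lemma sibB_succ (α : ℝ) (j : ℕ) : sibB α (j+1) = sibB α j * (1 - α/((j:ℝ)+1)) := by
  unfold sibB
  rw [Finset.prod_Icc_succ_top (by omega)]
  push_cast
  ring

lemma sibP_succ (α : ℝ) (j : ℕ) : sibP α (j+1) = α/((j:ℝ)+1) * sibB α j := by
  unfold sibP sibB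
  rw [if_neg (Nat.succ_ne_zero j)]
  push_cast
  simp

lemma sibP_zero (α : ℝ) : sibP α 0 = 0 := by simp [sibP]

lemma sibB_pos (α : ℝ) (hα0 : 0 < α) (hα1 : α < 1) (j : ℕ) : 0 < sibB α j := by
  apply Finset.prod_pos
  intro ℓ hℓ
  rw [Finset.mem_Icc] at hℓ
  have h1 : (1:ℝ) ≤ ℓ := by exact_mod_cast hℓ.1
  have : α / ℓ ≤ α := by
    apply div_le_self hα0.le h1
  linarith

lemma sibB_le_one (α : ℝ) (hα0 : 0 < α) (hα1 : α < 1) (j : ℕ) : sibB α j ≤ 1 := by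
  apply Finset.prod_le_one
  · intro ℓ hℓ
    rw [Finset.mem_Icc] at hℓ
    have h1 : (1:ℝ) ≤ ℓ := by exact_mod_cast hℓ.1
    have : α / ℓ ≤ α := div_le_self hα0.le h1
    linarith
  · intro ℓ hℓ
    rw [Finset.mem_Icc] at hℓ
    have h1 : (1:ℝ) ≤ ℓ := by exact_mod_cast hℓ.1
    have : 0 ≤ α / ℓ := by positivity
    linarith

lemma sibP_nonneg (α : ℝ) (hα0 : 0 < α) (hα1 : α < 1) (m : ℕ) : 0 ≤ sibP α m := by
  cases m with
  | zero => simp [sibP_zero]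
  | succ j =>
    rw [sibP_succ]
    have := sibB_pos α hα0 hα1 j
    have hj : (0:ℝ) < (j:ℝ)+1 := by positivity
    positivity

lemma sum_sibP (α : ℝ) (j : ℕ) :
    ∑ m ∈ Finset.range (j+1), sibP α m = 1 - sibB α j := by
  induction j with
  | zero => simp [sibP_zero, sibB_zero]
  | succ j ih =>
    rw [Finset.sum_range_succ, ih, sibP_succ, sibB_succ]
    ring

lemma sibB_eq_gchoose (α : ℝ) (j : ℕ) : sibB α j = (-1:ℝ)^j * gchoose (α-1) j := by
  induction j with
  | zero => simp [sibB_zero, gchoose_zero]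
  | succ j ih =>
    have hj : ((j:ℝ)+1) ≠ 0 := by positivity
    rw [sibB_succ, ih, gchoose_succ, pow_succ]
    field_simp
    ring

lemma sibP_eq (α : ℝ) (j : ℕ) :
    sibP α j = (-1:ℝ)^(j+1) * gchoose α j + (if j = 0 then 1 else 0) := by
  cases j with
  | zero => simp [sibP_zero, gchoose_zero]
  | succ j =>
    have hne : ((j:ℝ)+1) ≠ 0 := by positivity
    have h2 := succ_mul_gchoose α j
    rw [sibP_succ, sibB_eq_gchoose, if_neg (Nat.succ_ne_zero j), add_zero]
    have hg : gchoose α (j+1) = α * gchoose (α-1) j / ((j:ℝ)+1) := by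
      rw [eq_div_iff hne, mul_comm _ ((j:ℝ)+1), h2]
    rw [hg, pow_succ, pow_succ]
    field_simp

lemma Scomb_zero (α : ℝ) (n : ℕ) : Scomb α 0 n = if n = 0 then 1 else 0 := by
  unfold Scomb
  rw [Finset.sum_range_one]
  cases n with
  | zero => simp [gchoose_zero]
  | succ n =>
    simp [gchoose_zero_left (n+1) (Nat.succ_ne_zero n)]

lemma pascal_sum (k : ℕ) (g : ℕ → ℝ) :
    ∑ ℓ ∈ Finset.range (k+2), (-1:ℝ)^ℓ * (((k+1).choose ℓ : ℕ):ℝ) * g ℓ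
    = ∑ ℓ ∈ Finset.range (k+1), (-1:ℝ)^ℓ * ((k.choose ℓ : ℕ):ℝ) * g ℓ
      - ∑ ℓ ∈ Finset.range (k+1), (-1:ℝ)^ℓ * ((k.choose ℓ : ℕ):ℝ) * g (ℓ+1) := by
  have claim3 : ∑ ℓ ∈ Finset.range (k+1), (-1:ℝ)^(ℓ+1) * ((k.choose (ℓ+1) : ℕ):ℝ) * g (ℓ+1)
      = (∑ ℓ ∈ Finset.range (k+1), (-1:ℝ)^ℓ * ((k.choose ℓ : ℕ):ℝ) * g ℓ) - g 0 := by
    have h1 := Finset.sum_range_succ' (fun ℓ => (-1:ℝ)^ℓ * ((k.choose ℓ:ℕ):ℝ) * g ℓ) (k+1)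
    have h2 := Finset.sum_range_succ (fun ℓ => (-1:ℝ)^ℓ * ((k.choose ℓ:ℕ):ℝ) * g ℓ) (k+1)
    simp only [Nat.choose_succ_self, Nat.cast_zero, mul_zero, zero_mul, add_zero,
      Nat.choose_zero_right, Nat.cast_one, pow_zero, one_mul, mul_one] at h1 h2
    rw [h2] at h1
    linarith
  rw [Finset.sum_range_succ' _ (k+1)]
  have hterm : ∀ ℓ ∈ Finset.range (k+1),
      (-1:ℝ)^(ℓ+1) * (((k+1).choose (ℓ+1) : ℕ):ℝ) * g (ℓ+1)
      = -((-1:ℝ)^ℓ * ((k.choose ℓ:ℕ):ℝ) * g (ℓ+1))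
        + (-1:ℝ)^(ℓ+1) * ((k.choose (ℓ+1):ℕ):ℝ) * g (ℓ+1) := by
    intro ℓ _
    rw [Nat.choose_succ_succ]
    push_cast
    ring
  rw [Finset.sum_congr rfl hterm, Finset.sum_add_distrib, Finset.sum_neg_distrib, claim3]
  simp only [Nat.choose_zero_right, Nat.cast_one, pow_zero, one_mul, mul_one]
  ring

lemma Scomb_succ (α : ℝ) (k n : ℕ) :
    ∑ m ∈ Finset.range (n+1), Scomb α k m * sibP α (n-m) = Scomb α (k+1) n := by
  have hsib : ∀ m ∈ Finset.range (n+1), Scomb α k m * sibP α (n-m)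
      = Scomb α k m * ((-1:ℝ)^(n-m+1) * gchoose α (n-m))
        + Scomb α k m * (if n-m = 0 then 1 else 0) := by
    intro m _; rw [sibP_eq]; ring
  rw [Finset.sum_congr rfl hsib, Finset.sum_add_distrib]
  have h2 : ∑ m ∈ Finset.range (n+1), Scomb α k m * (if n-m = 0 then 1 else 0)
      = Scomb α k n := by
    rw [Finset.sum_eq_single n]
    · simp
    · intro m hm hne; rw [Finset.mem_range] at hm
      rw [if_neg (by omega), mul_zero]
    · intro h; exact absurd (Finset.self_mem_range_succ n) h
  rw [h2]
  have h1 : ∑ m ∈ Finset.range (n+1), Scomb α k m * ((-1:ℝ)^(n-m+1) * gchoose α (n-m))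
      = -((-1:ℝ)^n * ∑ ℓ ∈ Finset.range (k+1),
          (-1:ℝ)^ℓ * (k.choose ℓ:ℝ) * gchoose ((ℓ:ℝ)*α + α) n) := by
    have hswap : ∀ m ∈ Finset.range (n+1),
        Scomb α k m * ((-1:ℝ)^(n-m+1) * gchoose α (n-m))
        = ∑ ℓ ∈ Finset.range (k+1),
            -((-1:ℝ)^n * ((-1:ℝ)^ℓ * (k.choose ℓ:ℝ)
              * (gchoose ((ℓ:ℝ)*α) m * gchoose α (n-m)))) := by
      intro m hm
      rw [Finset.mem_range] at hm
      have hsign : (-1:ℝ)^m * (-1:ℝ)^(n-m+1) = -(-1:ℝ)^n := by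
        rw [← pow_add]
        have he : m + (n-m+1) = n+1 := by omega
        rw [he, pow_succ]
        ring
      unfold Scomb
      rw [mul_comm ((-1:ℝ)^m), mul_assoc, Finset.sum_mul]
      apply Finset.sum_congr rfl
      intro ℓ _
      have hs2 : (-1:ℝ)^m * ((-1:ℝ)^(n-m+1) * gchoose α (n-m))
          = -(-1:ℝ)^n * gchoose α (n-m) := by
        rw [← mul_assoc, hsign]
      rw [hs2]
      ring
    rw [Finset.sum_congr rfl hswap, Finset.sum_comm]
    have hin : ∀ ℓ ∈ Finset.range (k+1),
        ∑ m ∈ Finset.range (n+1),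
          -((-1:ℝ)^n * ((-1:ℝ)^ℓ * (k.choose ℓ:ℝ)
            * (gchoose ((ℓ:ℝ)*α) m * gchoose α (n-m))))
        = -((-1:ℝ)^n * ((-1:ℝ)^ℓ * (k.choose ℓ:ℝ) * gchoose ((ℓ:ℝ)*α + α) n)) := by
      intro ℓ _
      rw [Finset.sum_neg_distrib, ← gchoose_vandermonde n ((ℓ:ℝ)*α) α]
      congr 1
      rw [Finset.mul_sum, Finset.mul_sum]
    rw [Finset.sum_congr rfl hin, Finset.sum_neg_distrib, Finset.mul_sum]
  rw [h1]
  unfold Scomb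
  rw [pascal_sum k (fun ℓ => gchoose ((ℓ:ℝ)*α) n)]
  have hc : ∀ ℓ ∈ Finset.range (k+1),
      (-1:ℝ)^ℓ * ((k.choose ℓ:ℕ):ℝ) * gchoose (((ℓ+1:ℕ):ℝ)*α) n
      = (-1:ℝ)^ℓ * ((k.choose ℓ:ℕ):ℝ) * gchoose ((ℓ:ℝ)*α + α) n := by
    intro ℓ _
    congr 2
    push_cast
    ring
  rw [Finset.sum_congr rfl hc]
  ring

lemma Scomb_final (α : ℝ) (k n : ℕ) :
    ∑ m ∈ Finset.range (n+1), Scomb α k m * sibB α (n-m)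
    = (-1:ℝ)^n * ∑ ℓ ∈ Finset.range (k+1),
        (-1:ℝ)^ℓ * (k.choose ℓ:ℝ) * gchoose (((ℓ:ℝ)+1)*α - 1) n := by
  have hswap : ∀ m ∈ Finset.range (n+1),
      Scomb α k m * sibB α (n-m)
      = ∑ ℓ ∈ Finset.range (k+1),
          (-1:ℝ)^n * ((-1:ℝ)^ℓ * (k.choose ℓ:ℝ)
            * (gchoose ((ℓ:ℝ)*α) m * gchoose (α-1) (n-m))) := by
    intro m hm
    rw [Finset.mem_range] at hm
    have hsign : (-1:ℝ)^m * (-1:ℝ)^(n-m) = (-1:ℝ)^n := by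
      rw [← pow_add]
      congr 1
      omega
    rw [sibB_eq_gchoose]
    unfold Scomb
    rw [mul_comm ((-1:ℝ)^m), mul_assoc, Finset.sum_mul]
    apply Finset.sum_congr rfl
    intro ℓ _
    have hs2 : (-1:ℝ)^m * ((-1:ℝ)^(n-m) * gchoose (α-1) (n-m))
        = (-1:ℝ)^n * gchoose (α-1) (n-m) := by
      rw [← mul_assoc, hsign]
    rw [hs2]
    ring
  rw [Finset.sum_congr rfl hswap, Finset.sum_comm]
  have hin : ∀ ℓ ∈ Finset.range (k+1),
      ∑ m ∈ Finset.range (n+1),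
        (-1:ℝ)^n * ((-1:ℝ)^ℓ * (k.choose ℓ:ℝ)
          * (gchoose ((ℓ:ℝ)*α) m * gchoose (α-1) (n-m)))
      = (-1:ℝ)^n * ((-1:ℝ)^ℓ * (k.choose ℓ:ℝ) * gchoose (((ℓ:ℝ)+1)*α - 1) n) := by
    intro ℓ _
    have harg : ((ℓ:ℝ)+1)*α - 1 = (ℓ:ℝ)*α + (α-1) := by ring
    rw [harg, ← gchoose_vandermonde n ((ℓ:ℝ)*α) (α-1)]
    rw [Finset.mul_sum, Finset.mul_sum]
  rw [Finset.sum_congr rfl hin, Finset.mul_sum]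

lemma Scomb_nonneg (α : ℝ) (hα0 : 0 < α) (hα1 : α < 1) (k n : ℕ) : 0 ≤ Scomb α k n := by
  induction k generalizing n with
  | zero => rw [Scomb_zero]; split <;> norm_num
  | succ k ih =>
    rw [← Scomb_succ]
    apply Finset.sum_nonneg
    intro m _
    exact mul_nonneg (ih m) (sibP_nonneg α hα0 hα1 _)

lemma sibuya_tail {Ω : Type*} [MeasurableSpace Ω] (μ : Measure Ω) [IsProbabilityMeasure μ]
    (α : ℝ) (hα0 : 0 < α) (hα1 : α < 1) (X : Ω → ℕ) (hX : Measurable X)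
    (hd : ∀ m, μ {ω | X ω = m} = ENNReal.ofReal (sibP α m)) (j : ℕ) :
    μ {ω | j < X ω} = ENNReal.ofReal (sibB α j) := by
  have hunion : {ω | X ω ≤ j} = ⋃ m ∈ Finset.range (j+1), X ⁻¹' {m} := by
    ext ω
    simp only [Set.mem_setOf_eq, Set.mem_iUnion, Set.mem_preimage, Set.mem_singleton_iff,
      Finset.mem_range]
    constructor
    · intro h; exact ⟨X ω, by omega, rfl⟩
    · rintro ⟨m, hm, rfl⟩; omega
  have hmeasm : ∀ m : ℕ, MeasurableSet (X ⁻¹' {m}) := fun m => hX (measurableSet_singleton m)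
  have hdisj : (↑(Finset.range (j+1)) : Set ℕ).PairwiseDisjoint (fun m => X ⁻¹' {m}) := by
    intro a _ b _ hab
    apply Set.disjoint_left.mpr
    intro ω ha hb
    exact hab (by simp at ha hb; omega)
  have hle : μ {ω | X ω ≤ j} = ENNReal.ofReal (1 - sibB α j) := by
    rw [hunion, measure_biUnion_finset hdisj (fun m _ => hmeasm m)]
    have : ∀ m ∈ Finset.range (j+1), μ (X ⁻¹' {m}) = ENNReal.ofReal (sibP α m) := by
      intro m _
      exact hd m
    rw [Finset.sum_congr rfl this, ← ENNReal.ofReal_sum_of_nonneg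
      (fun m _ => sibP_nonneg α hα0 hα1 m), sum_sibP]
  have hcompl : {ω | j < X ω} = {ω | X ω ≤ j}ᶜ := by
    ext ω; simp [not_le]
  have hmeas2 : MeasurableSet {ω | X ω ≤ j} := by
    rw [hunion]
    exact (Finset.range (j+1)).measurableSet_biUnion (fun m _ => hmeasm m)
  rw [hcompl, measure_compl hmeas2 (measure_ne_top μ _), measure_univ, hle]
  have hb0 : 0 ≤ sibB α j := (sibB_pos α hα0 hα1 j).le
  have hb1 : sibB α j ≤ 1 := sibB_le_one α hα0 hα1 j
  have hone : (1 : ENNReal) = ENNReal.ofReal (1 - sibB α j) + ENNReal.ofReal (sibB α j) := by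
    rw [← ENNReal.ofReal_add (by linarith) hb0]
    norm_num
  rw [hone, ENNReal.add_sub_cancel_left ENNReal.ofReal_ne_top]

lemma sibuya_sum_dist {Ω : Type*} [MeasurableSpace Ω] (μ : Measure Ω) [IsProbabilityMeasure μ]
    (α : ℝ) (hα0 : 0 < α) (hα1 : α < 1)
    (W : ℕ → Ω → ℕ) (hmeas : ∀ i, Measurable (W i))
    (hindep : ProbabilityTheory.iIndepFun W μ)
    (hd : ∀ i m, μ {ω | W i ω = m} = ENNReal.ofReal (sibP α m)) :
    ∀ k n, μ {ω | (∑ i ∈ Finset.range k, W i ω) = n} = ENNReal.ofReal (Scomb α k n) := by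
  intro k
  induction k with
  | zero =>
    intro n
    simp only [Finset.range_zero, Finset.sum_empty, Scomb_zero]
    cases n with
    | zero => simp
    | succ n =>
      have : {ω : Ω | 0 = n+1} = ∅ := by
        ext ω; simp
      rw [this]
      simp
  | succ k ih =>
    intro n
    have hset : {ω | (∑ i ∈ Finset.range (k+1), W i ω) = n}
        = ⋃ m ∈ Finset.range (n+1),
            ({ω | (∑ i ∈ Finset.range k, W i ω) = m} ∩ {ω | W k ω = n - m}) := by
      ext ω
      simp only [Set.mem_setOf_eq, Finset.sum_range_succ, Set.mem_iUnion, Set.mem_inter_iff,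
        Finset.mem_range]
      constructor
      · intro h
        exact ⟨∑ i ∈ Finset.range k, W i ω, by omega, rfl, by omega⟩
      · rintro ⟨m, hm, h1, h2⟩
        omega
    have hS : Measurable (fun ω => ∑ i ∈ Finset.range k, W i ω) :=
      Finset.measurable_sum _ (fun i _ => hmeas i)
    have hSapp : ∀ m : ℕ, {ω | (∑ i ∈ Finset.range k, W i ω) = m}
        = (∑ i ∈ Finset.range k, W i) ⁻¹' {m} := by
      intro m
      ext ω
      simp [Finset.sum_apply]
    have hind : ProbabilityTheory.IndepFun (∑ i ∈ Finset.range k, W i) (W k) μ :=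
      ProbabilityTheory.iIndepFun.indepFun_finsetSum_of_notMem hindep hmeas
        Finset.notMem_range_self
    have hdisj : (↑(Finset.range (n+1)) : Set ℕ).PairwiseDisjoint
        (fun m => {ω | (∑ i ∈ Finset.range k, W i ω) = m} ∩ {ω | W k ω = n - m}) := by
      intro a _ b _ hab
      apply Set.disjoint_left.mpr
      intro ω ha hb
      exact hab (by
        simp only [Set.mem_inter_iff, Set.mem_setOf_eq] at ha hb
        omega)
    have hmeasm : ∀ m : ℕ, MeasurableSet
        ({ω | (∑ i ∈ Finset.range k, W i ω) = m} ∩ {ω | W k ω = n - m}) := by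
      intro m
      exact ((hS (measurableSet_singleton m)).inter ((hmeas k) (measurableSet_singleton (n-m))))
    rw [hset, measure_biUnion_finset hdisj (fun m _ => hmeasm m)]
    have hterm : ∀ m ∈ Finset.range (n+1),
        μ ({ω | (∑ i ∈ Finset.range k, W i ω) = m} ∩ {ω | W k ω = n - m})
        = ENNReal.ofReal (Scomb α k m * sibP α (n - m)) := by
      intro m _
      have h1 : {ω | (∑ i ∈ Finset.range k, W i ω) = m} ∩ {ω | W k ω = n - m}
          = (∑ i ∈ Finset.range k, W i) ⁻¹' {m} ∩ (W k) ⁻¹' {n - m} := by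
        rw [hSapp]; rfl
      rw [h1, hind.measure_inter_preimage_eq_mul _ _ (measurableSet_singleton m)
        (measurableSet_singleton (n-m)), ← hSapp]
      have h2 : (W k) ⁻¹' {n - m} = {ω | W k ω = n - m} := rfl
      rw [h2, ih m, hd k (n-m), ← ENNReal.ofReal_mul (Scomb_nonneg α hα0 hα1 k m)]
    rw [Finset.sum_congr rfl hterm, ← ENNReal.ofReal_sum_of_nonneg
      (fun m _ => mul_nonneg (Scomb_nonneg α hα0 hα1 k m) (sibP_nonneg α hα0 hα1 (n-m))),
      Scomb_succ]


/-- For `0 < α < 1`, the probability of exactly `k` jumps up to time `n`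
for a renewal process with i.i.d. Sibuya waiting times is
`ℙ[T_k ≤ n < T_{k+1}] = (-1)^n ∑_{ℓ=0}^k (-1)^ℓ binom(k,ℓ) binom((ℓ+1)α - 1, n)`,
where `T_k = W_1 + ⋯ + W_k`. -/
theorem sibuya_renewal_exactly_k_jumps
    (α : ℝ) (hα0 : 0 < α) (hα1 : α < 1)
    {Ω : Type*} [MeasurableSpace Ω] (μ : Measure Ω) [IsProbabilityMeasure μ]
    (W : ℕ → Ω → ℕ) (hmeas : ∀ i, Measurable (W i))
    (hindep : ProbabilityTheory.iIndepFun W μ)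
    (hdist : ∀ i m, μ {ω | W i ω = m} = ENNReal.ofReal
      (if m = 0 then 0 else (α / m) * ∏ ℓ ∈ Finset.Icc 1 (m - 1), (1 - α / (ℓ : ℝ))))
    (T : ℕ → Ω → ℕ) (hT : ∀ j ω, T j ω = ∑ i ∈ Finset.range j, W i ω)
    (k n : ℕ) :
    (μ {ω | T k ω ≤ n ∧ n < T (k + 1) ω}).toReal =
      (-1 : ℝ) ^ n * ∑ ℓ ∈ Finset.range (k + 1),
        (-1 : ℝ) ^ ℓ * (k.choose ℓ : ℝ) * gchoose (((ℓ : ℝ) + 1) * α - 1) n := by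
  have hd' : ∀ i m, μ {ω | W i ω = m} = ENNReal.ofReal (sibP α m) := by
    intro i m
    rw [hdist i m]
    rfl
  have hS : Measurable (fun ω => ∑ i ∈ Finset.range k, W i ω) :=
    Finset.measurable_sum _ (fun i _ => hmeas i)
  have hSapp : ∀ m : ℕ, {ω | (∑ i ∈ Finset.range k, W i ω) = m}
      = (∑ i ∈ Finset.range k, W i) ⁻¹' {m} := by
    intro m; ext ω; simp [Finset.sum_apply]
  have hind : ProbabilityTheory.IndepFun (∑ i ∈ Finset.range k, W i) (W k) μ :=
    ProbabilityTheory.iIndepFun.indepFun_finsetSum_of_notMem hindep hmeas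
      Finset.notMem_range_self
  have hset : {ω | T k ω ≤ n ∧ n < T (k + 1) ω}
      = ⋃ m ∈ Finset.range (n+1),
          ({ω | (∑ i ∈ Finset.range k, W i ω) = m} ∩ {ω | n - m < W k ω}) := by
    ext ω
    simp only [Set.mem_setOf_eq, hT, Finset.sum_range_succ, Set.mem_iUnion, Set.mem_inter_iff,
      Finset.mem_range]
    constructor
    · rintro ⟨h1, h2⟩
      exact ⟨∑ i ∈ Finset.range k, W i ω, by omega, rfl, by omega⟩
    · rintro ⟨m, hm, h1, h2⟩
      omega
  have hdisj : (↑(Finset.range (n+1)) : Set ℕ).PairwiseDisjoint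
      (fun m => {ω | (∑ i ∈ Finset.range k, W i ω) = m} ∩ {ω | n - m < W k ω}) := by
    intro a _ b _ hab
    apply Set.disjoint_left.mpr
    intro ω ha hb
    exact hab (by
      simp only [Set.mem_inter_iff, Set.mem_setOf_eq] at ha hb
      omega)
  have hmeasm : ∀ m : ℕ, MeasurableSet
      ({ω | (∑ i ∈ Finset.range k, W i ω) = m} ∩ {ω | n - m < W k ω}) := by
    intro m
    exact (hS (measurableSet_singleton m)).inter
      ((hmeas k) (Set.to_countable _).measurableSet)
  have htail : ∀ j : ℕ, μ {ω | j < W k ω} = ENNReal.ofReal (sibB α j) :=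
    sibuya_tail μ α hα0 hα1 (W k) (hmeas k) (hd' k)
  have hterm : ∀ m ∈ Finset.range (n+1),
      μ ({ω | (∑ i ∈ Finset.range k, W i ω) = m} ∩ {ω | n - m < W k ω})
      = ENNReal.ofReal (Scomb α k m * sibB α (n - m)) := by
    intro m _
    have h1 : {ω | (∑ i ∈ Finset.range k, W i ω) = m} ∩ {ω | n - m < W k ω}
        = (∑ i ∈ Finset.range k, W i) ⁻¹' {m} ∩ (W k) ⁻¹' (Set.Ioi (n-m)) := by
      rw [hSapp]; rfl
    rw [h1, hind.measure_inter_preimage_eq_mul _ _ (measurableSet_singleton m)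
      (Set.to_countable _).measurableSet, ← hSapp]
    have h2 : (W k) ⁻¹' (Set.Ioi (n-m)) = {ω | n - m < W k ω} := rfl
    rw [h2, sibuya_sum_dist μ α hα0 hα1 W hmeas hindep hd' k m, htail (n-m),
      ← ENNReal.ofReal_mul (Scomb_nonneg α hα0 hα1 k m)]
  rw [hset, measure_biUnion_finset hdisj (fun m _ => hmeasm m),
    Finset.sum_congr rfl hterm, ← ENNReal.ofReal_sum_of_nonneg
      (fun m _ => mul_nonneg (Scomb_nonneg α hα0 hα1 k m) (sibB_pos α hα0 hα1 (n-m)).le),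
    Scomb_final]
  rw [ENNReal.toReal_ofReal]
  rw [← Scomb_final]
  exact Finset.sum_nonneg
    (fun m _ => mul_nonneg (Scomb_nonneg α hα0 hα1 k m) (sibB_pos α hα0 hα1 (n-m)).le)
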